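/- If Q is a maximal increasing subsequence of R_{A,B}[f(i⊢,j⊢):f(i⊣,j⊣)] that is [r(i⊢,j⊢):r(i⊣,j⊣)]-banded, then Q begins with r(i⊢,j⊢) and ends with r(i⊣,j⊣). -/

import Mathlib

/-- Formal tokens: `r i j` (weight `c - d i j`) and `rt i j` (the token `r̃(i,j)`, weight `c`). -/
inductive Tok where
  | r  (i j : ℕ) : Tok
  | rt (i j : ℕ) : Tok
deriving DecidableEq

/-- The domain of tokens: `r(i,j)` for `1 ≤ i ≤ m`, `1 ≤ j ≤ n`,
and `r̃(i,j)` for `2 ≤ i ≤ m`, `2 ≤ j ≤ n`. -/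
def TokDom (m n : ℕ) : Tok → Prop
  | .r i j  => 1 ≤ i ∧ i ≤ m ∧ 1 ≤ j ∧ j ≤ n
  | .rt i j => 2 ≤ i ∧ i ≤ m ∧ 2 ≤ j ∧ j ≤ n

/-- The position `f(q)` of a token in the sequence `R_{A,B}`. -/
def tpos (n : ℕ) : Tok → ℕ
  | .r i j  => (i - 1) * (2 * n - 1) + j
  | .rt i j => (i - 1) * (2 * n - 1) - j + 2

/-- The integer value of a token in the sequence `R_{A,B}`. -/
def tval (m : ℕ) : Tok → ℕ
  | .r i j  => (j - 1) * (2 * m - 1) + i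
  | .rt i j => (j - 1) * (2 * m - 1) - i + 2

/-- The (half-integer) row coordinate `i_q` of a token. -/
def iq : Tok → ℚ
  | .r i _  => i
  | .rt i _ => (i : ℚ) - 1/2

/-- The (half-integer) column coordinate `j_q` of a token. -/
def jq : Tok → ℚ
  | .r _ j  => j
  | .rt _ j => (j : ℚ) - 1/2

/-- The weight of a token: `c - d i j` for `r(i,j)` and `c` for `r̃(i,j)`. -/
def tw (c : ℕ) (d : ℕ → ℕ → ℕ) : Tok → ℕ
  | .r i j => c - d i j
  | .rt _ _ => c

/-- `Q` is an increasing subsequence of the segment of `R_{A,B}` occupying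
positions `pl` through `pr`: its tokens are in the domain, their positions lie in
`[pl, pr]` and strictly increase, and their values strictly increase. -/
def IncSeg (m n pl pr : ℕ) (Q : List Tok) : Prop :=
  (∀ t ∈ Q, TokDom m n t ∧ pl ≤ tpos n t ∧ tpos n t ≤ pr) ∧
    Q.Chain' fun t t' => tpos n t < tpos n t' ∧ tval m t < tval m t'

/-- `Q` is `[a:b]`-banded: every value lies in `[a, b]`. -/
def Banded (m a b : ℕ) (Q : List Tok) : Prop :=
  ∀ t ∈ Q, a ≤ tval m t ∧ tval m t ≤ b

/-- `Q` is a maximal increasing subsequence of the segment `[pl, pr]` of `R_{A,B}`: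
it is the only increasing subsequence of the segment having it as a subsequence. -/
def MaxIncSeg (m n pl pr : ℕ) (Q : List Tok) : Prop :=
  IncSeg m n pl pr Q ∧ ∀ Q', IncSeg m n pl pr Q' → Q.Sublist Q' → Q' = Q

/-- `Q` is a maximal `[a:b]`-banded increasing subsequence of the segment `[pl, pr]`. -/
def MaxBandIncSeg (m n pl pr a b : ℕ) (Q : List Tok) : Prop :=
  IncSeg m n pl pr Q ∧ Banded m a b Q ∧
    ∀ Q', IncSeg m n pl pr Q' → Banded m a b Q' → Q.Sublist Q' → Q' = Q



private lemma euclid_aux {N a b x y : ℕ} (hx1 : 1 ≤ x) (hxN : x ≤ N)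
    (hy1 : 1 ≤ y) (hyN : y ≤ N) (h : a * N + x = b * N + y) : a = b ∧ x = y := by
  rcases Nat.lt_trichotomy a b with hl | he | hg
  · exfalso
    obtain ⟨k, rfl⟩ : ∃ k, b = a + (k + 1) := ⟨b - a - 1, by omega⟩
    rw [add_mul] at h
    have hK : N ≤ (k + 1) * N := Nat.le_mul_of_pos_left N (by omega)
    set P := a * N with hP
    set K := (k + 1) * N with hKdef
    omega
  · subst he
    exact ⟨rfl, by omega⟩
  · exfalso
    obtain ⟨k, rfl⟩ : ∃ k, a = b + (k + 1) := ⟨a - b - 1, by omega⟩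
    rw [add_mul] at h
    have hK : N ≤ (k + 1) * N := Nat.le_mul_of_pos_left N (by omega)
    set P := b * N with hP
    set K := (k + 1) * N with hKdef
    omega

private lemma rt_pos_rewrite {n i j : ℕ} (hn : 1 ≤ n) (hi : 2 ≤ i) (hj2 : 2 ≤ j) (hjn : j ≤ n) :
    (i - 1) * (2 * n - 1) - j + 2 = (i - 2) * (2 * n - 1) + (2 * n + 1 - j) := by
  have h1 : (i - 1) * (2 * n - 1) = (i - 2) * (2 * n - 1) + (2 * n - 1) := by
    have : i - 1 = (i - 2) + 1 := by omega
    rw [this, add_mul, one_mul]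
  set A := (i - 1) * (2 * n - 1) with hA
  set B := (i - 2) * (2 * n - 1) with hB
  omega

private lemma tpos_inj {m n : ℕ} (hn : 1 ≤ n) {t t' : Tok}
    (ht : TokDom m n t) (ht' : TokDom m n t') (h : tpos n t = tpos n t') : t = t' := by
  cases t with
  | r i j =>
    cases t' with
    | r i' j' =>
      obtain ⟨hi1, _, hj1, hjn'⟩ := ht
      obtain ⟨hi1', _, hj1', hjn''⟩ := ht'
      simp only [tpos] at h
      obtain ⟨h1, h2⟩ := euclid_aux (N := 2 * n - 1) hj1 (by omega) hj1' (by omega) h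
      have : i = i' := by omega
      rw [this, h2]
    | rt i' j' =>
      obtain ⟨hi1, _, hj1, hjn'⟩ := ht
      obtain ⟨hi1', _, hj1', hjn''⟩ := ht'
      simp only [tpos] at h
      rw [rt_pos_rewrite hn hi1' hj1' hjn''] at h
      obtain ⟨h1, h2⟩ := euclid_aux (N := 2 * n - 1) hj1 (by omega) (by omega) (by omega) h
      omega
  | rt i j =>
    cases t' with
    | r i' j' =>
      obtain ⟨hi1, _, hj1, hjn'⟩ := ht
      obtain ⟨hi1', _, hj1', hjn''⟩ := ht'
      simp only [tpos] at h
      rw [rt_pos_rewrite hn hi1 hj1 hjn'] at h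
      obtain ⟨h1, h2⟩ := euclid_aux (N := 2 * n - 1) (by omega) (by omega) hj1' (by omega) h
      omega
    | rt i' j' =>
      obtain ⟨hi1, _, hj1, hjn'⟩ := ht
      obtain ⟨hi1', _, hj1', hjn''⟩ := ht'
      simp only [tpos] at h
      rw [rt_pos_rewrite hn hi1 hj1 hjn', rt_pos_rewrite hn hi1' hj1' hjn''] at h
      obtain ⟨h1, h2⟩ := euclid_aux (N := 2 * n - 1) (by omega) (by omega) (by omega) (by omega) h
      have : i = i' := by omega
      have hj : j = j' := by omega
      rw [this, hj]

private def tswap : Tok → Tok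
  | .r i j => .r j i
  | .rt i j => .rt j i

private lemma tval_eq_tpos_swap (m : ℕ) (t : Tok) : tval m t = tpos m (tswap t) := by
  cases t <;> rfl

private lemma tswap_dom {m n : ℕ} {t : Tok} (h : TokDom m n t) : TokDom n m (tswap t) := by
  cases t with
  | r i j => exact ⟨h.2.2.1, h.2.2.2, h.1, h.2.1⟩
  | rt i j => exact ⟨h.2.2.1, h.2.2.2, h.1, h.2.1⟩

private lemma tswap_inj {t t' : Tok} (h : tswap t = tswap t') : t = t' := by
  cases t <;> cases t' <;> simp_all [tswap]

private lemma tval_inj {m n : ℕ} (hm : 1 ≤ m) {t t' : Tok}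
    (ht : TokDom m n t) (ht' : TokDom m n t') (h : tval m t = tval m t') : t = t' := by
  rw [tval_eq_tpos_swap, tval_eq_tpos_swap] at h
  exact tswap_inj (tpos_inj hm (tswap_dom ht) (tswap_dom ht') h)


theorem banded_maximal_endpoints (m n : ℕ) (il ir jl jr : ℕ)
    (hil : 1 ≤ il) (hii : il ≤ ir) (him : ir ≤ m)
    (hjl : 1 ≤ jl) (hjj : jl ≤ jr) (hjn : jr ≤ n)
    (Q : List Tok)
    (hQ : MaxBandIncSeg m n (tpos n (.r il jl)) (tpos n (.r ir jr))
        (tval m (.r il jl)) (tval m (.r ir jr)) Q) :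
    Q.head? = some (.r il jl) ∧ Q.getLast? = some (.r ir jr) := by

  obtain ⟨hinc, hband, hmax⟩ := hQ
  have hn : 1 ≤ n := le_trans hjl (le_trans hjj hjn)
  have hm : 1 ≤ m := le_trans hil (le_trans hii him)
  set x₀ : Tok := .r il jl with hx₀
  set x₁ : Tok := .r ir jr with hx₁
  have hd0 : TokDom m n x₀ := ⟨hil, le_trans hii him, hjl, le_trans hjj hjn⟩
  have hd1 : TokDom m n x₁ := ⟨le_trans hil hii, him, le_trans hjl hjj, hjn⟩
  have hple : tpos n x₀ ≤ tpos n x₁ := by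
    simp only [hx₀, hx₁, tpos]
    exact Nat.add_le_add (Nat.mul_le_mul_right _ (by omega)) hjj
  have hvle : tval m x₀ ≤ tval m x₁ := by
    simp only [hx₀, hx₁, tval]
    exact Nat.add_le_add (Nat.mul_le_mul_right _ (by omega)) hii
  have hkey : ∀ t ∈ Q,
      (t ≠ x₀ → tpos n x₀ < tpos n t ∧ tval m x₀ < tval m t) ∧
      (t ≠ x₁ → tpos n t < tpos n x₁ ∧ tval m t < tval m x₁) := by
    intro t ht
    obtain ⟨hdom, hp1, hp2⟩ := hinc.1 t ht
    obtain ⟨hv1, hv2⟩ := hband t ht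
    refine ⟨fun hne => ⟨?_, ?_⟩, fun hne => ⟨?_, ?_⟩⟩
    · rcases lt_or_eq_of_le hp1 with h | h
      · exact h
      · exact absurd (tpos_inj hn hd0 hdom h).symm hne
    · rcases lt_or_eq_of_le hv1 with h | h
      · exact h
      · exact absurd (tval_inj hm hd0 hdom h).symm hne
    · rcases lt_or_eq_of_le hp2 with h | h
      · exact h
      · exact absurd (tpos_inj hn hdom hd1 h) hne
    · rcases lt_or_eq_of_le hv2 with h | h
      · exact h
      · exact absurd (tval_inj hm hdom hd1 h) hne
  have hne : Q ≠ [] := by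
    intro hQnil
    have hinc' : IncSeg m n (tpos n x₀) (tpos n x₁) [x₀] := by
      constructor
      · intro t ht
        simp only [List.mem_singleton] at ht
        subst ht
        exact ⟨hd0, le_refl _, hple⟩
      · exact List.isChain_singleton _
    have hband' : Banded m (tval m x₀) (tval m x₁) [x₀] := by
      intro t ht
      simp only [List.mem_singleton] at ht
      subst ht
      exact ⟨le_refl _, hvle⟩
    have := hmax [x₀] hinc' hband' (hQnil ▸ List.nil_sublist _)
    simp [hQnil] at this
  constructor
  · rw [List.head?_eq_head hne]
    congr 1
    by_contra hhd
    have hmem : Q.head hne ∈ Q := List.head_mem hne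
    have hstrict := (hkey _ hmem).1 hhd
    have hinc' : IncSeg m n (tpos n x₀) (tpos n x₁) (x₀ :: Q) := by
      constructor
      · intro t ht
        rcases List.mem_cons.mp ht with h | h
        · subst h; exact ⟨hd0, le_refl _, hple⟩
        · exact hinc.1 t h
      · show List.IsChain _ _; rw [List.isChain_cons]
        refine ⟨?_, hinc.2⟩
        intro y hy
        rw [List.head?_eq_head hne, Option.mem_some_iff] at hy
        subst hy
        exact hstrict
    have hband' : Banded m (tval m x₀) (tval m x₁) (x₀ :: Q) := by
      intro t ht
      rcases List.mem_cons.mp ht with h | h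
      · subst h; exact ⟨le_refl _, hvle⟩
      · exact hband t h
    have heq := hmax (x₀ :: Q) hinc' hband' (List.sublist_cons_self _ _)
    have := congrArg List.length heq
    simp at this
  · rw [List.getLast?_eq_getLast hne]
    congr 1
    by_contra hlst
    have hmem : Q.getLast hne ∈ Q := List.getLast_mem hne
    have hstrict := (hkey _ hmem).2 hlst
    have hinc' : IncSeg m n (tpos n x₀) (tpos n x₁) (Q ++ [x₁]) := by
      constructor
      · intro t ht
        rcases List.mem_append.mp ht with h | h
        · exact hinc.1 t h
        · simp only [List.mem_singleton] at h
          subst h; exact ⟨hd1, hple, le_refl _⟩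
      · show List.IsChain _ _; rw [List.isChain_append]
        refine ⟨hinc.2, List.isChain_singleton _, ?_⟩
        intro x hx y hy
        rw [List.getLast?_eq_getLast hne, Option.mem_some_iff] at hx
        simp only [List.head?_cons, Option.mem_some_iff] at hy
        subst hx; subst hy
        exact hstrict
    have hband' : Banded m (tval m x₀) (tval m x₁) (Q ++ [x₁]) := by
      intro t ht
      rcases List.mem_append.mp ht with h | h
      · exact hband t h
      · simp only [List.mem_singleton] at h
        subst h; exact ⟨hvle, le_refl _⟩
    have heq := hmax (Q ++ [x₁]) hinc' hband' (List.sublist_append_left _ _)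
    have := congrArg List.length heq
    simp at this
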